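/- Let G = (V, E) be a finite simple graph of maximum degree at most Δ (Δ ≥ 1). Then there exists a greedy packing x of G such that x_v ≥ 1/(Δ+1) for every vertex v ∈ V and Σ_x(v) ≥ 1/2 for every vertex v ∈ V. -/

import Mathlib

open Finset
open Classical

/-- A greedy packing of a finite simple graph `G`: a nonnegative vertex vector `x` for
which there is a (strict) linear order `p` on the vertices such that for every vertex `v`,
`x v` plus the sum of `x u` over neighbors `u` of `v` preceding `v` is at most `1`. -/
def IsGreedyPacking {V : Type*} [Fintype V] (G : SimpleGraph V) [DecidableRel G.Adj]
    (x : V → ℝ) : Prop :=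
  (∀ v : V, 0 ≤ x v) ∧
  ∃ p : V → V → Prop, IsStrictTotalOrder V p ∧
    ∀ v : V, x v + ∑ u ∈ G.neighborFinset v, (if p u v then x u else 0) ≤ 1

/-- In a finite simple graph of maximum degree at most `Δ ≥ 1`, there
exists a greedy packing `x` with `x v ≥ 1/(Δ+1)` and `Σ_x(v) ≥ 1/2` for every vertex. -/
theorem exists_saturated_greedyPacking
    {V : Type*} [Fintype V] [DecidableEq V]
    (G : SimpleGraph V) [DecidableRel G.Adj]
    (Δ : ℕ) (hΔ : 1 ≤ Δ)
    (hdeg : ∀ v : V, G.degree v ≤ Δ) :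
    ∃ x : V → ℝ,
      IsGreedyPacking G x ∧
      (∀ v : V, 1 / ((Δ : ℝ) + 1) ≤ x v) ∧
      (∀ v : V, (1 : ℝ) / 2 ≤ x v + ∑ u ∈ G.neighborFinset v, x u) := by
  classical
  have hD1 : (1:ℝ) ≤ (Δ:ℝ) := by exact_mod_cast hΔ
  have hDpos : (0:ℝ) < (Δ:ℝ) + 1 := by linarith
  have hDinvpos : (0:ℝ) < 1/((Δ:ℝ)+1) := by positivity
  have hDhalf : 1/((Δ:ℝ)+1) ≤ 1/2 := by
    apply one_div_le_one_div_of_le <;> linarith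
  -- low-degree vertices
  set L : Finset V := Finset.univ.filter (fun v => 2 * G.degree v + 2 ≤ Δ) with hLdef
  -- independent subsets of L
  set S : Finset (Finset V) :=
    L.powerset.filter (fun H => ∀ u ∈ H, ∀ w ∈ H, ¬ G.Adj u w) with hSdef
  have hSne : S.Nonempty := ⟨∅, by simp [hSdef]⟩
  obtain ⟨H, hHS, hHmax⟩ := Finset.exists_max_image S Finset.card hSne
  have hHS' := hHS
  rw [hSdef, Finset.mem_filter, Finset.mem_powerset] at hHS'
  obtain ⟨hHL, hind⟩ := hHS'
  -- H-membership implies low degree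
  have hHlow : ∀ v ∈ H, 2 * G.degree v + 2 ≤ Δ := by
    intro v hv
    have := hHL hv
    rw [hLdef, Finset.mem_filter] at this
    exact this.2
  -- maximality: every low-degree vertex outside H has a neighbor in H
  have hdom : ∀ v, 2 * G.degree v + 2 ≤ Δ → v ∉ H → ∃ w ∈ H, G.Adj v w := by
    intro v hvL hvH
    by_contra hno
    push_neg at hno
    have hins : insert v H ∈ S := by
      rw [hSdef, Finset.mem_filter, Finset.mem_powerset]
      constructor
      · apply Finset.insert_subset
        · rw [hLdef, Finset.mem_filter]; exact ⟨Finset.mem_univ v, hvL⟩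
        · exact hHL
      · intro a ha b hb hadj
        rcases Finset.mem_insert.mp ha with ha' | ha'
        · rcases Finset.mem_insert.mp hb with hb' | hb'
          · rw [ha', hb'] at hadj; exact G.irrefl hadj
          · rw [ha'] at hadj; exact hno b hb' hadj
        · rcases Finset.mem_insert.mp hb with hb' | hb'
          · rw [hb'] at hadj; exact hno a ha' hadj.symm
          · exact hind a ha' b hb' hadj
    have h1 := hHmax _ hins
    have h2 : (insert v H).card = H.card + 1 := Finset.card_insert_of_notMem hvH
    omega
  -- the weights
  set x : V → ℝ := fun v => if v ∈ H then 1/2 else 1/((Δ:ℝ)+1) with hxdef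
  have hxlb : ∀ v, 1/((Δ:ℝ)+1) ≤ x v := by
    intro v
    rw [hxdef]
    dsimp only
    split_ifs with hv
    · exact hDhalf
    · exact le_rfl
  have hxnn : ∀ v, 0 ≤ x v := fun v => le_trans (le_of_lt hDinvpos) (hxlb v)
  have hxub : ∀ v, v ∉ H → x v = 1/((Δ:ℝ)+1) := by
    intro v hv; rw [hxdef]; simp [hv]
  -- the order: non-H vertices first
  let e : V ≃ Fin (Fintype.card V) := Fintype.equivFin V
  set g : V → ℕ := fun v => (if v ∈ H then Fintype.card V else 0) + (e v : ℕ) with hgdef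
  have hginj : Function.Injective g := by
    intro a b hab
    rw [hgdef] at hab
    have ha' : ((e a : ℕ)) < Fintype.card V := (e a).isLt
    have hb' : ((e b : ℕ)) < Fintype.card V := (e b).isLt
    have hab' : ((e a : ℕ)) = (e b : ℕ) := by
      by_cases ha : a ∈ H <;> by_cases hb : b ∈ H <;> simp [ha, hb] at hab <;> omega
    exact e.injective (Fin.ext hab')
  set p : V → V → Prop := fun u v => g u < g v with hpdef
  have hsto : IsStrictTotalOrder V p := by
    refine { trichotomous := ?_, irrefl := ?_, trans := ?_ }
    · intro a b hab hba
      rcases lt_trichotomy (g a) (g b) with h | h | h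
      · exact absurd h hab
      · exact hginj h
      · exact absurd h hba
    · intro a
      exact lt_irrefl (g a)
    · intro a b c hab hbc
      exact lt_trans hab hbc
  -- key bound on preceding-neighbor sums
  have hprec : ∀ v : V, ∑ u ∈ G.neighborFinset v,
        (@ite ℝ (p u v) (Classical.propDecidable _) (x u) 0)
      ≤ (G.degree v : ℝ) * (1/((Δ:ℝ)+1)) := by
    intro v
    have : ∀ u ∈ G.neighborFinset v,
        (@ite ℝ (p u v) (Classical.propDecidable _) (x u) 0) ≤ 1/((Δ:ℝ)+1) := by
      intro u hu
      rw [SimpleGraph.mem_neighborFinset] at hu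
      by_cases hpuv : p u v
      · rw [if_pos hpuv]
        by_cases huH : u ∈ H
        · exfalso
          by_cases hvH : v ∈ H
          · exact hind v hvH u huH hu
          · -- u ∈ H, v ∉ H, but p u v means g u < g v : impossible
            rw [hpdef] at hpuv
            rw [hgdef] at hpuv
            simp only [huH, hvH, if_pos, if_neg, if_true, if_false] at hpuv
            have := (e v).isLt
            omega
        · rw [hxub u huH]
      · rw [if_neg hpuv]; exact le_of_lt hDinvpos
    calc ∑ u ∈ G.neighborFinset v, (@ite ℝ (p u v) (Classical.propDecidable _) (x u) 0)
        ≤ ∑ u ∈ G.neighborFinset v, 1/((Δ:ℝ)+1) := Finset.sum_le_sum this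
      _ = (G.degree v : ℝ) * (1/((Δ:ℝ)+1)) := by
          rw [Finset.sum_const, G.card_neighborFinset_eq_degree, nsmul_eq_mul]
  refine ⟨x, ⟨hxnn, p, hsto, ?_⟩, hxlb, ?_⟩
  · -- packing constraints
    intro v
    have hsum := hprec v
    have hdv : (G.degree v : ℝ) ≤ (Δ:ℝ) := by exact_mod_cast hdeg v
    by_cases hv : v ∈ H
    · have hlow : (2 * G.degree v + 2 : ℝ) ≤ (Δ:ℝ) := by exact_mod_cast hHlow v hv
      have hxv : x v = 1/2 := by rw [hxdef]; simp [hv]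
      rw [hxv]
      have hkey : (G.degree v : ℝ) * (1/((Δ:ℝ)+1)) ≤ 1/2 := by
        rw [mul_one_div, div_le_div_iff₀ hDpos (by norm_num : (0:ℝ) < 2)]
        linarith
      exact le_trans (add_le_add_right hsum _) (by linarith)
    · rw [hxub v hv]
      have hkey : 1/((Δ:ℝ)+1) + (G.degree v : ℝ) * (1/((Δ:ℝ)+1)) ≤ 1 := by
        rw [mul_one_div, ← add_div, div_le_one hDpos]
        linarith
      exact le_trans (add_le_add_right hsum _) hkey
  · -- saturation
    intro v
    by_cases hv : v ∈ H
    · have hxv : x v = 1/2 := by rw [hxdef]; simp [hv]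
      have : (0:ℝ) ≤ ∑ u ∈ G.neighborFinset v, x u :=
        Finset.sum_nonneg (fun u _ => hxnn u)
      rw [hxv]; linarith
    · by_cases hnb : ∃ w ∈ G.neighborFinset v, w ∈ H
      · obtain ⟨w, hwnb, hwH⟩ := hnb
        have hxw : x w = 1/2 := by rw [hxdef]; simp [hwH]
        have : x w ≤ ∑ u ∈ G.neighborFinset v, x u :=
          Finset.single_le_sum (fun u _ => hxnn u) hwnb
        have hxv := hxnn v
        rw [hxw] at this
        linarith
      · push_neg at hnb
        have hvnotlow : ¬ (2 * G.degree v + 2 ≤ Δ) := by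
          intro hlow
          obtain ⟨w, hwH, hadj⟩ := hdom v hlow hv
          exact hnb w (by rwa [SimpleGraph.mem_neighborFinset]) hwH
        have hlow' : (Δ:ℝ) + 1 ≤ 2 * (G.degree v : ℝ) + 2 := by
          have : Δ + 1 ≤ 2 * G.degree v + 2 := by omega
          exact_mod_cast this
        have hsum : (G.degree v : ℝ) * (1/((Δ:ℝ)+1)) ≤ ∑ u ∈ G.neighborFinset v, x u := by
          calc (G.degree v : ℝ) * (1/((Δ:ℝ)+1))
              = ∑ u ∈ G.neighborFinset v, 1/((Δ:ℝ)+1) := by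
                rw [Finset.sum_const, G.card_neighborFinset_eq_degree, nsmul_eq_mul]
            _ ≤ ∑ u ∈ G.neighborFinset v, x u := Finset.sum_le_sum (fun u _ => hxlb u)
        have hxv := hxlb v
        have hkey : (1:ℝ)/2 ≤ 1/((Δ:ℝ)+1) + (G.degree v : ℝ) * (1/((Δ:ℝ)+1)) := by
          rw [mul_one_div, ← add_div, div_le_div_iff₀ (by norm_num : (0:ℝ) < 2) hDpos]
          linarith
        linarith
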